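/- Let C be an oriented 3-graph on vertex set V such that (i) the only cycle in C consists of all its triples, and (ii) for every oriented 3-set ρ on V not in C, C ∪ {ρ} contains no cycle using ρ. Then the remaining 3-subsets of V can be oriented to form a 3-tournament T in which C is the only cycle. -/

import Mathlib

/-- The signed indicator of the directed edge `u → v`, as a (skew-symmetric) function on
ordered pairs of vertices: entry `+1` at `(u, v)`, `-1` at `(v, u)`, `0` elsewhere.
A vector indexed by 2-sets `{i < j}` with entry `+1` for an induced edge `i → j` and `-1`
for `j → i` is recorded by its values on ordered pairs. -/
def edgeVec {V : Type*} [DecidableEq V] (u v : V) : V → V → ℝ := fun i j =>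
  (if i = u ∧ j = v then 1 else 0) - (if i = v ∧ j = u then 1 else 0)

/-- The signed incidence vector of the oriented triple `→abc`, which induces the directed
edges `a → b`, `b → c`, `c → a`. -/
def incVec {V : Type*} [DecidableEq V] (a b c : V) : V → V → ℝ :=
  edgeVec a b + edgeVec b c + edgeVec c a

/-- Vertices are `Fin n`; an (oriented) triple is recorded as an ordered triple. -/
abbrev Triple (n : ℕ) := Fin n × Fin n × Fin n

/-- The ordered triple `(a, b, c)` is sorted: `a < b < c`. -/
def Sorted3 {n : ℕ} (p : Triple n) : Prop := p.1 < p.2.1 ∧ p.2.1 < p.2.2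

instance {n : ℕ} : DecidablePred (Sorted3 (n := n)) := fun _ => instDecidableAnd

/-- An orientation function `ω` assigns to each (sorted) triple one of its two cyclic
orientations: `true` for `→abc`, `false` for `→acb`.  The incidence vector of the triple
`{a, b, c}` under this orientation. -/
def oVec {n : ℕ} (ω : Triple n → Bool) (p : Triple n) : Fin n → Fin n → ℝ :=
  if ω p then incVec p.1 p.2.1 p.2.2 else incVec p.1 p.2.2 p.2.1

/-- `C` is a cycle of the oriented 3-graph with (sorted) triple set `D` and orientation `ω`:
a nonempty subset of `D` admitting strictly positive weights whose weighted incidence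
vectors sum to zero. -/
def IsCycle {n : ℕ} (ω : Triple n → Bool) (D : Finset (Triple n)) (C : Finset (Triple n)) :
    Prop :=
  C.Nonempty ∧ C ⊆ D ∧
    ∃ α : Triple n → ℝ, (∀ p ∈ C, 0 < α p) ∧ ∑ p ∈ C, α p • oVec ω p = 0

/-- The triple set of the complete oriented 3-graph (3-tournament) on `n` vertices: all
sorted triples. -/
def allTriples (n : ℕ) : Finset (Triple n) := Finset.univ.filter Sorted3

/-- The column space of the incidence matrix of the 3-tournament on `n` vertices with
orientation `ω`: the span of the incidence vectors of all its oriented triples. -/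
def colSpace {n : ℕ} (ω : Triple n → Bool) : Submodule ℝ (Fin n → Fin n → ℝ) :=
  Submodule.span ℝ (oVec ω '' {p | Sorted3 p})

/-- Reversing the cyclic orientation negates the incidence vector. -/
lemma incVec_swap {V : Type*} [DecidableEq V] (a b c : V) :
    incVec a c b = -incVec a b c := by
  funext i j
  simp only [incVec, edgeVec, Pi.add_apply, Pi.neg_apply]
  ring

/-- If two orientation functions agree at `p`, the incidence vectors agree. -/
lemma oVec_congr {n : ℕ} {ω ω' : Triple n → Bool} {p : Triple n} (h : ω' p = ω p) :
    oVec ω' p = oVec ω p := by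
  simp [oVec, h]

/-- Given finitely many nonzero vectors in a vector space over an infinite field,
there is a linear functional which is nonzero on all of them. -/
lemma dual_sep {K : Type*} [Field K] [Infinite K] {Q : Type*} [AddCommGroup Q] [Module K Q]
    {ι : Type*} [DecidableEq ι] (s : Finset ι) (w : ι → Q) (h : ∀ i ∈ s, w i ≠ 0) :
    ∃ g : Module.Dual K Q, ∀ i ∈ s, g (w i) ≠ 0 := by
  classical
  induction s using Finset.induction_on with
  | empty => exact ⟨0, by simp⟩
  | insert _ _ ha ih =>
    rename_i a s
    obtain ⟨g, hg⟩ := ih fun i hi => h i (Finset.mem_insert_of_mem hi)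
    have hwa : w a ≠ 0 := h a (Finset.mem_insert_self a s)
    obtain ⟨ψ, hψ⟩ : ∃ ψ : Module.Dual K Q, ψ (w a) ≠ 0 := by
      by_contra hcon
      push_neg at hcon
      exact hwa ((Module.forall_dual_apply_eq_zero_iff K (w a)).mp hcon)
    obtain ⟨t, ht⟩ := Infinite.exists_notMem_finset
      ((insert a s).image fun i => -g (w i) / ψ (w i))
    refine ⟨g + t • ψ, fun i hi h0 => ?_⟩
    simp only [LinearMap.add_apply, LinearMap.smul_apply, smul_eq_mul] at h0
    by_cases hψi : ψ (w i) = 0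
    · rcases Finset.mem_insert.mp hi with rfl | hi'
      · exact hψ hψi
      · exact hg i hi' (by simpa [hψi] using h0)
    · refine ht (Finset.mem_image.mpr ⟨i, hi, ?_⟩)
      rw [div_eq_iff hψi]
      linear_combination -h0

/-- **Linial–Morgenstern.**  Let `C` be an oriented 3-graph such that (i) the only cycle in
`C` consists of all of its triples, and (ii) no cycle through `ρ` is created by adding any
single oriented 3-set `ρ` (in either orientation).  Then the remaining 3-sets can be
oriented to obtain a 3-tournament in which `C` is the only cycle. -/
theorem extend_to_tournament_unique_cycle {n : ℕ} (ω : Triple n → Bool)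
    (C : Finset (Triple n)) (hC : C ⊆ allTriples n)
    (hcyc : IsCycle ω C C)
    (huniq : ∀ C', IsCycle ω C C' → C' = C)
    (hadd : ∀ ρ ∈ allTriples n, ρ ∉ C → ∀ b : Bool,
      ¬ ∃ C', IsCycle (Function.update ω ρ b) (insert ρ C) C' ∧ ρ ∈ C') :
    ∃ ω' : Triple n → Bool, (∀ p ∈ C, ω' p = ω p) ∧
      IsCycle ω' (allTriples n) C ∧
      ∀ C', IsCycle ω' (allTriples n) C' → C' = C := by
  classical
  obtain ⟨hCne, -, α, hαpos, hαsum⟩ := hcyc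
  set L : Submodule ℝ (Fin n → Fin n → ℝ) := Submodule.span ℝ (oVec ω '' ↑C) with hLdef
  -- Step 1: the incidence vector of any sorted triple not in `C` lies outside `L`.
  have hnot : ∀ ρ, Sorted3 ρ → ρ ∉ C → oVec ω ρ ∉ L := by
    intro ρ hρs hρC hmem
    rw [hLdef, Finsupp.mem_span_image_iff_linearCombination] at hmem
    obtain ⟨l, hlsupp, hlsum⟩ := hmem
    have hsum2 : ∑ p ∈ C, l p • oVec ω p = oVec ω ρ := by
      rw [← hlsum, Finsupp.linearCombination_apply]
      exact (Finsupp.sum_of_support_subset l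
        (Finsupp.mem_supported ℝ l |>.mp hlsupp) (fun i a => a • oVec ω i)
        (fun i _ => zero_smul ℝ (oVec ω i))).symm
    obtain ⟨M, hM⟩ := (C.image fun p => l p / α p).exists_le
    set t : ℝ := M + 1 with htdef
    have ht : ∀ p ∈ C, l p < t * α p := by
      intro p hp
      have h1 : l p / α p ≤ M := hM _ (Finset.mem_image_of_mem _ hp)
      have h2 : l p / α p < t := by rw [htdef]; linarith
      exact (div_lt_iff₀ (hαpos p hp)).mp h2
    refine hadd ρ (by simp [allTriples, hρs]) hρC (ω ρ)
      ⟨insert ρ C, ?_, Finset.mem_insert_self ρ C⟩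
    rw [Function.update_eq_self]
    refine ⟨⟨ρ, Finset.mem_insert_self ρ C⟩, Finset.Subset.refl _,
      fun p => if p = ρ then 1 else t * α p - l p, ?_, ?_⟩
    · intro p hp
      rcases Finset.mem_insert.mp hp with rfl | hp'
      · simp
      · have hne : p ≠ ρ := fun h => hρC (h ▸ hp')
        simpa [hne] using sub_pos.mpr (ht p hp')
    · have key : ∑ p ∈ C, (t * α p - l p) • oVec ω p = -oVec ω ρ := by
        rw [Finset.sum_congr rfl fun p _ => sub_smul (t * α p) (l p) (oVec ω p),
          Finset.sum_sub_distrib, hsum2]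
        have h3 : ∑ p ∈ C, (t * α p) • oVec ω p = t • ∑ p ∈ C, α p • oVec ω p := by
          rw [Finset.smul_sum]
          exact Finset.sum_congr rfl fun p _ => (smul_smul t (α p) _).symm
        rw [h3, hαsum, smul_zero, zero_sub]
      rw [Finset.sum_insert hρC]
      have e1 : (fun p => if p = ρ then (1:ℝ) else t * α p - l p) ρ • oVec ω ρ
          = oVec ω ρ := by simp
      have e2 : ∑ x ∈ C, (fun p => if p = ρ then (1:ℝ) else t * α p - l p) x • oVec ω x
          = ∑ p ∈ C, (t * α p - l p) • oVec ω p :=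
        Finset.sum_congr rfl fun p hp => by
          simp [show p ≠ ρ from fun h => hρC (h ▸ hp)]
      rw [e1, e2, key, add_neg_cancel]
  -- Step 2: a functional vanishing on `L` and nonzero on every other triple's vector.
  have hker : ∀ p ∈ allTriples n \ C, L.mkQ (oVec ω p) ≠ 0 := by
    intro p hp h0
    rw [Finset.mem_sdiff, allTriples, Finset.mem_filter] at hp
    exact hnot p hp.1.2 hp.2 ((Submodule.Quotient.mk_eq_zero L).mp h0)
  obtain ⟨g, hg⟩ := dual_sep (K := ℝ) (allTriples n \ C) (fun p => L.mkQ (oVec ω p)) hker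
  set φ : (Fin n → Fin n → ℝ) →ₗ[ℝ] ℝ := g ∘ₗ L.mkQ with hφdef
  have hφ0 : ∀ x ∈ L, φ x = 0 := by
    intro x hx
    have : L.mkQ x = 0 := (Submodule.Quotient.mk_eq_zero L).mpr hx
    simp [hφdef, this]
  have hφne : ∀ p, Sorted3 p → p ∉ C → φ (oVec ω p) ≠ 0 := by
    intro p hs hpc
    exact hg p (Finset.mem_sdiff.mpr ⟨by simp [allTriples, hs], hpc⟩)
  -- Step 3: the extending orientation.
  set ω' : Triple n → Bool :=
    fun p => if p ∈ C then ω p else decide (0 < φ (incVec p.1 p.2.1 p.2.2)) with hω'def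
  have hω'C : ∀ p ∈ C, ω' p = ω p := fun p hp => by simp [hω'def, hp]
  have hoC : ∀ p ∈ C, oVec ω' p = oVec ω p := fun p hp => oVec_congr (hω'C p hp)
  have hpos : ∀ p, Sorted3 p → p ∉ C → 0 < φ (oVec ω' p) := by
    intro p hs hpc
    have hincne : φ (incVec p.1 p.2.1 p.2.2) ≠ 0 := by
      have h1 := hφne p hs hpc
      cases hb : ω p with
      | true => rwa [oVec, hb, if_pos rfl] at h1
      | false =>
        rw [oVec, hb, if_neg (by simp), incVec_swap, map_neg, neg_ne_zero] at h1
        exact h1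
    by_cases h : 0 < φ (incVec p.1 p.2.1 p.2.2)
    · have : ω' p = true := by simp [hω'def, hpc, h]
      rwa [oVec, this, if_pos rfl]
    · have hlt : φ (incVec p.1 p.2.1 p.2.2) < 0 :=
        lt_of_le_of_ne (not_lt.mp h) hincne
      have : ω' p = false := by simp [hω'def, hpc, h]
      rw [oVec, this, if_neg (by simp), incVec_swap, map_neg]
      linarith
  refine ⟨ω', hω'C, ⟨hCne, hC, α, hαpos, ?_⟩, ?_⟩
  · rw [Finset.sum_congr rfl fun p hp => by rw [hoC p hp]]
    exact hαsum
  · rintro C' ⟨hne', hsub', β, hβpos, hβsum⟩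
    have hsorted : ∀ p ∈ C', Sorted3 p := by
      intro p hp
      have := hsub' hp
      rw [allTriples, Finset.mem_filter] at this
      exact this.2
    have hsubC : C' ⊆ C := by
      intro p hp
      by_contra hpC
      have h0 : ∑ q ∈ C', β q * φ (oVec ω' q) = 0 := by
        have h1 := congrArg φ hβsum
        rw [map_sum] at h1
        simpa [map_smul, smul_eq_mul] using h1
      have hnonneg : ∀ q ∈ C', 0 ≤ β q * φ (oVec ω' q) := by
        intro q hq
        by_cases hqC : q ∈ C
        · rw [hoC q hqC,
            hφ0 _ (Submodule.subset_span (Set.mem_image_of_mem _ hqC)), mul_zero]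
        · exact le_of_lt (mul_pos (hβpos q hq) (hpos q (hsorted q hq) hqC))
      have := (Finset.sum_eq_zero_iff_of_nonneg hnonneg).mp h0 p hp
      exact absurd this (ne_of_gt (mul_pos (hβpos p hp) (hpos p (hsorted p hp) hpC)))
    refine huniq C' ⟨hne', hsubC, β, hβpos, ?_⟩
    rw [← hβsum]
    exact Finset.sum_congr rfl fun p hp => by rw [hoC p (hsubC hp)]
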